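/- Suppose x, u, w, z, a are finite random variables with the conditional independence x ⊥ (w,z) | (a,u). Then for every fixed value a of the action, the matrix identity P(W, z | a, U)·P(U | a, X) = P(W, z | a, X) holds, where (P(W, z | a, U))_{ij} = P(w_i, z | a, u_j), (P(U|a,X))_{jk} = P(u_j | a, x_k), and (P(W,z|a,X))_{ik} = P(w_i, z | a, x_k). Consequently, if P(U | a, X) is a square invertible matrix, then P(W, z | a, U) = P(W, z | a, X)·P(U | a, X)^{-1}. -/
import Mathlib


open Finset Matrix
open scoped Classical

noncomputable def Pr {Ω : Type*} [Fintype Ω] (μ : Ω → ℝ) (E : Ω → Prop) : ℝ :=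
  ∑ ω, if E ω then μ ω else 0

noncomputable def cPr {Ω : Type*} [Fintype Ω] (μ : Ω → ℝ) (E F : Ω → Prop) : ℝ :=
  Pr μ (fun ω => E ω ∧ F ω) / Pr μ F


lemma Pr_congr {Ω : Type*} [Fintype Ω] (μ : Ω → ℝ) {E F : Ω → Prop}
    (h : ∀ ω, E ω ↔ F ω) : Pr μ E = Pr μ F := by
  unfold Pr; exact Finset.sum_congr rfl fun ω _ => if_congr (h ω) rfl rfl

lemma Pr_nonneg {Ω : Type*} [Fintype Ω] {μ : Ω → ℝ} (hμ : ∀ ω, 0 ≤ μ ω)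
    (E : Ω → Prop) : 0 ≤ Pr μ E := by
  unfold Pr
  apply Finset.sum_nonneg
  intro ω _
  by_cases h : E ω <;> simp [h, hμ ω]

lemma Pr_mono {Ω : Type*} [Fintype Ω] {μ : Ω → ℝ} (hμ : ∀ ω, 0 ≤ μ ω)
    {E F : Ω → Prop} (h : ∀ ω, E ω → F ω) : Pr μ E ≤ Pr μ F := by
  unfold Pr
  apply Finset.sum_le_sum
  intro ω _
  by_cases hE : E ω
  · simp [hE, h ω hE]
  · simp [hE]
    by_cases hF : F ω <;> simp [hF, hμ ω]

lemma Pr_partition {Ω : Type*} [Fintype Ω] (μ : Ω → ℝ) (E : Ω → Prop)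
    {n : ℕ} (u : Ω → Fin n) :
    ∑ j, Pr μ (fun ω => E ω ∧ u ω = j) = Pr μ E := by
  unfold Pr
  rw [Finset.sum_comm]
  refine Finset.sum_congr rfl fun ω _ => ?_
  by_cases h : E ω <;> simp [h]

/-- if `x ⊥ (w,z) | (a,u)` then
`P(W, z | a, U) * P(U | a, X) = P(W, z | a, X)`, and if `P(U | a, X)` is invertible then
`P(W, z | a, U) = P(W, z | a, X) * P(U | a, X)⁻¹`.
Here `u` and `x` take values in sets of the same cardinality `n`. -/
theorem proxy_matrix_factorization
    {Ω : Type*} [Fintype Ω] (μ : Ω → ℝ) {n nw nz : ℕ} {Aty : Type*}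
    (x : Ω → Fin n) (u : Ω → Fin n) (w : Ω → Fin nw) (z : Ω → Fin nz) (a : Ω → Aty)
    (hμ : ∀ ω, 0 ≤ μ ω) (hsum : ∑ ω, μ ω = 1)
    (av : Aty) (zv : Fin nz)
    -- positivity of the conditioning events (a, u_j) and (a, x_k)
    (hposu : ∀ j, 0 < Pr μ (fun ω => a ω = av ∧ u ω = j))
    (hposx : ∀ k, 0 < Pr μ (fun ω => a ω = av ∧ x ω = k))
    -- conditional independence x ⊥ (w,z) | (a,u):  P(w,z | a,u,x) = P(w,z | a,u)
    (hCI : ∀ (wv : Fin nw) (zv' : Fin nz) (j k : Fin n),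
      cPr μ (fun ω => w ω = wv ∧ z ω = zv')
          (fun ω => a ω = av ∧ u ω = j ∧ x ω = k) =
        cPr μ (fun ω => w ω = wv ∧ z ω = zv') (fun ω => a ω = av ∧ u ω = j)) :
    ((Matrix.of fun (i : Fin nw) (j : Fin n) =>
        cPr μ (fun ω => w ω = i ∧ z ω = zv) (fun ω => a ω = av ∧ u ω = j)) *
      (Matrix.of fun (j k : Fin n) =>
        cPr μ (fun ω => u ω = j) (fun ω => a ω = av ∧ x ω = k)) =
      Matrix.of fun (i : Fin nw) (k : Fin n) =>
        cPr μ (fun ω => w ω = i ∧ z ω = zv) (fun ω => a ω = av ∧ x ω = k)) ∧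
    (IsUnit (Matrix.of fun (j k : Fin n) =>
        cPr μ (fun ω => u ω = j) (fun ω => a ω = av ∧ x ω = k)).det →
      (Matrix.of fun (i : Fin nw) (j : Fin n) =>
        cPr μ (fun ω => w ω = i ∧ z ω = zv) (fun ω => a ω = av ∧ u ω = j)) =
      (Matrix.of fun (i : Fin nw) (k : Fin n) =>
        cPr μ (fun ω => w ω = i ∧ z ω = zv) (fun ω => a ω = av ∧ x ω = k)) *
      (Matrix.of fun (j k : Fin n) =>
        cPr μ (fun ω => u ω = j) (fun ω => a ω = av ∧ x ω = k))⁻¹) := by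

  have key : (Matrix.of fun (i : Fin nw) (j : Fin n) =>
        cPr μ (fun ω => w ω = i ∧ z ω = zv) (fun ω => a ω = av ∧ u ω = j)) *
      (Matrix.of fun (j k : Fin n) =>
        cPr μ (fun ω => u ω = j) (fun ω => a ω = av ∧ x ω = k)) =
      Matrix.of fun (i : Fin nw) (k : Fin n) =>
        cPr μ (fun ω => w ω = i ∧ z ω = zv) (fun ω => a ω = av ∧ x ω = k) := by
    ext i k
    rw [Matrix.mul_apply]
    simp only [Matrix.of_apply]
    have hP := hposx k
    have hterm : ∀ j : Fin n,
        cPr μ (fun ω => w ω = i ∧ z ω = zv) (fun ω => a ω = av ∧ u ω = j) *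
          cPr μ (fun ω => u ω = j) (fun ω => a ω = av ∧ x ω = k) =
        Pr μ (fun ω => ((w ω = i ∧ z ω = zv) ∧ a ω = av ∧ x ω = k) ∧ u ω = j) /
          Pr μ (fun ω => a ω = av ∧ x ω = k) := by
      intro j
      have hD2 : Pr μ (fun ω => (u ω = j) ∧ (a ω = av ∧ x ω = k)) =
          Pr μ (fun ω => a ω = av ∧ u ω = j ∧ x ω = k) :=
        Pr_congr μ (fun ω => by tauto)
      have hNcongr : Pr μ (fun ω => (w ω = i ∧ z ω = zv) ∧ (a ω = av ∧ u ω = j ∧ x ω = k)) =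
          Pr μ (fun ω => ((w ω = i ∧ z ω = zv) ∧ a ω = av ∧ x ω = k) ∧ u ω = j) :=
        Pr_congr μ (fun ω => by tauto)
      by_cases hD : Pr μ (fun ω => a ω = av ∧ u ω = j ∧ x ω = k) = 0
      · have hN : Pr μ (fun ω => ((w ω = i ∧ z ω = zv) ∧ a ω = av ∧ x ω = k) ∧ u ω = j) = 0 := by
          have h1 : Pr μ (fun ω => ((w ω = i ∧ z ω = zv) ∧ a ω = av ∧ x ω = k) ∧ u ω = j) ≤
              Pr μ (fun ω => a ω = av ∧ u ω = j ∧ x ω = k) :=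
            Pr_mono hμ (fun ω h => by tauto)
          have h2 := Pr_nonneg hμ
            (fun ω => ((w ω = i ∧ z ω = zv) ∧ a ω = av ∧ x ω = k) ∧ u ω = j)
          linarith
        rw [hN]
        unfold cPr
        rw [hD2, hD]
        simp
      · rw [← hCI i zv j k]
        unfold cPr
        rw [hD2, hNcongr]
        field_simp
    rw [Finset.sum_congr rfl (fun j _ => hterm j), ← Finset.sum_div,
      Pr_partition μ (fun ω => (w ω = i ∧ z ω = zv) ∧ a ω = av ∧ x ω = k) u]
    unfold cPr
    rfl
  refine ⟨key, fun hdet => ?_⟩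
  rw [← key, Matrix.mul_nonsing_inv_cancel_right _ _ hdet]
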